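/- arXiv:1102.2942 — 2 statements merged into one kernel-verified Lean document; each statement's English description precedes it below -/
import Mathlib

section
/- Let r > 0 and h ∈ (0, π/2), and let (ρ_k)_{k∈ℤ} be a real sequence with Σ_k ρ_k² ≤ r². For each fixed n ∈ ℤ, set a_{k,n} := (ρ_k − ρ_n)/(π(k−n)) for k ≠ n and a_{n,n} := 0. Then |Σ_{k∈ℤ} a_{k,n}| ≤ r/√3 and Σ_{k∈ℤ} a_{k,n}² ≤ 4π²r²/3 (sums in principal value sense where needed). -/
open Filter Finset


lemma akn_hasSum_int_inv_sq : HasSum (fun j : ℤ => 1 / (j : ℝ) ^ 2) (Real.pi ^ 2 / 3) := by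
  have h1 : HasSum (fun n : ℕ => (1 : ℝ) / (n : ℝ) ^ 2) (Real.pi ^ 2 / 6) := hasSum_zeta_two
  have h2 : HasSum (fun n : ℕ => (1 : ℝ) / ((n : ℝ) + 1) ^ 2) (Real.pi ^ 2 / 6) := by
    have := (hasSum_nat_add_iff' (f := fun n : ℕ => (1 : ℝ) / (n : ℝ) ^ 2) 1).mpr h1
    simpa using this
  have := HasSum.of_nat_of_neg_add_one (f := fun j : ℤ => 1 / (j : ℝ) ^ 2)
    (by simpa using h1) (by convert h2 using 2 with m; push_cast; ring)
  convert this using 1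
  ring

lemma akn_sum_symm_zero (f : ℤ → ℝ) (hf : ∀ j, f (-j) = - f j) (M : ℤ) :
    ∑ j ∈ Icc (-M) M, f j = 0 := by
  have h : ∑ j ∈ Icc (-M) M, f (-j) = ∑ j ∈ Icc (-M) M, f j := by
    refine Finset.sum_equiv (Equiv.neg ℤ) (fun i => ?_) (fun i _ => rfl)
    simp only [Finset.mem_Icc, Equiv.neg_apply]
    omega
  simp only [hf, Finset.sum_neg_distrib] at h
  linarith

lemma akn_pv_tendsto (n : ℤ) :
    Tendsto (fun N : ℕ => ∑ k ∈ Finset.Icc (-(N : ℤ)) N,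
      (if k = n then 0 else 1 / ((k : ℝ) - n))) atTop (nhds 0) := by
  set f : ℤ → ℝ := fun j => if j = 0 then 0 else 1 / (j : ℝ) with hf
  have hodd : ∀ j, f (-j) = - f j := by
    intro j
    by_cases h : j = 0
    · simp [hf, h]
    · rw [hf]; simp only [neg_eq_zero, if_neg h]; push_cast; ring
  have hre : ∀ N : ℕ, ∑ k ∈ Finset.Icc (-(N : ℤ)) N,
      (if k = n then 0 else 1 / ((k : ℝ) - n)) = ∑ j ∈ Finset.Icc (-(N : ℤ) - n) (N - n), f j := by
    intro N
    refine Finset.sum_equiv (Equiv.subRight n)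
      (fun i => by simp only [Finset.mem_Icc, Equiv.subRight_apply]; omega) (fun i _ => ?_)
    simp only [Equiv.subRight_apply, hf]
    by_cases h : i = n
    · simp [h]
    · rw [if_neg h, if_neg (by omega)]; push_cast; ring
  have hbound : ∀ N : ℕ, n.natAbs ≤ N →
      |∑ j ∈ Finset.Icc (-(N : ℤ) - n) (N - n), f j| ≤
        2 * n.natAbs / ((N : ℝ) - n.natAbs + 1) := by
    intro N hN
    set M : ℤ := (N : ℤ) - n.natAbs with hM
    have hM0 : 0 ≤ M := by omega
    have hsub : Finset.Icc (-M) M ⊆ Finset.Icc (-(N : ℤ) - n) ((N : ℤ) - n) := by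
      intro x; simp only [Finset.mem_Icc]; omega
    rw [← Finset.sum_sdiff hsub, akn_sum_symm_zero f hodd M, add_zero]
    have hcard : (Finset.Icc (-(N : ℤ) - n) ((N : ℤ) - n) \ Finset.Icc (-M) M).card
        = 2 * n.natAbs := by
      rw [Finset.card_sdiff_of_subset hsub, Int.card_Icc, Int.card_Icc]; omega
    have h2 : (0 : ℝ) < (N : ℝ) - n.natAbs + 1 := by
      have : (n.natAbs : ℝ) ≤ (N : ℝ) := by exact_mod_cast hN
      linarith
    have hterm : ∀ j ∈ Finset.Icc (-(N : ℤ) - n) ((N : ℤ) - n) \ Finset.Icc (-M) M,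
        |f j| ≤ 1 / ((N : ℝ) - n.natAbs + 1) := by
      intro j hj
      simp only [Finset.mem_sdiff, Finset.mem_Icc, not_and_or, not_le] at hj
      have hjabs : M + 1 ≤ |j| := by
        rcases abs_cases j with ⟨h, _⟩ | ⟨h, _⟩ <;> omega
      have hj0 : j ≠ 0 := by omega
      rw [hf]
      simp only [if_neg hj0, abs_div, abs_one]
      have h1 : ((N : ℝ) - n.natAbs + 1) ≤ |(j : ℝ)| := by
        rw [← Int.cast_abs]
        have h3 : ((M + 1 : ℤ) : ℝ) ≤ ((|j| : ℤ) : ℝ) := by exact_mod_cast hjabs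
        rw [hM] at h3
        push_cast [Nat.cast_natAbs] at h3 ⊢
        linarith
      exact one_div_le_one_div_of_le h2 h1
    calc |∑ j ∈ Finset.Icc (-(N : ℤ) - n) ((N : ℤ) - n) \ Finset.Icc (-M) M, f j|
        ≤ ∑ j ∈ Finset.Icc (-(N : ℤ) - n) ((N : ℤ) - n) \ Finset.Icc (-M) M, |f j| :=
          Finset.abs_sum_le_sum_abs _ _
      _ ≤ ∑ _j ∈ Finset.Icc (-(N : ℤ) - n) ((N : ℤ) - n) \ Finset.Icc (-M) M,
            1 / ((N : ℝ) - n.natAbs + 1) := Finset.sum_le_sum hterm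
      _ = 2 * n.natAbs / ((N : ℝ) - n.natAbs + 1) := by
          rw [Finset.sum_const, hcard, nsmul_eq_mul]; push_cast; ring
  have hg : Tendsto (fun N : ℕ => 2 * (n.natAbs : ℝ) / ((N : ℝ) - n.natAbs + 1))
      atTop (nhds 0) := by
    apply Tendsto.div_atTop tendsto_const_nhds
    have h0 := tendsto_natCast_atTop_atTop (R := ℝ)
    have h1 := Filter.tendsto_atTop_add_const_right atTop (-(n.natAbs : ℝ) + 1) h0
    exact h1.congr (fun N => by ring)
  rw [tendsto_zero_iff_norm_tendsto_zero]
  refine squeeze_zero' (Eventually.of_forall fun N => norm_nonneg _) ?_ hg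
  filter_upwards [eventually_ge_atTop n.natAbs] with N hN
  rw [Real.norm_eq_abs, hre N]
  exact hbound N hN

/-- let `r > 0`, `h ∈ (0, π/2)`, and let `(ρ_k)_{k∈ℤ}` be real with
`Σ ρ_k² ≤ r²`.  With `a_{k,n} = (ρ_k − ρ_n)/(π(k−n))` for `k ≠ n`, `a_{n,n} = 0`,
the principal-value sum `Σ_k a_{k,n}` converges with modulus at most `r/√3`, and
`Σ_k a_{k,n}² ≤ 4π²r²/3`. -/
theorem akn_estimates (r h : ℝ) (hr : 0 < r) (hh : 0 < h) (hh' : h < Real.pi / 2)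
    (ρ : ℤ → ℝ) (hsum : Summable fun k => (ρ k) ^ 2)
    (hρ : (∑' k : ℤ, (ρ k) ^ 2) ≤ r ^ 2) (n : ℤ) :
    (∃ S : ℝ,
        Tendsto (fun N : ℕ => ∑ k ∈ Finset.Icc (-(N : ℤ)) N,
            (if k = n then 0 else (ρ k - ρ n) / (Real.pi * (k - n)))) atTop (nhds S) ∧
        |S| ≤ r / Real.sqrt 3) ∧
    (Summable fun k : ℤ =>
        (if k = n then 0 else (ρ k - ρ n) / (Real.pi * (k - n))) ^ 2) ∧
    (∑' k : ℤ, (if k = n then 0 else (ρ k - ρ n) / (Real.pi * (k - n))) ^ 2) ≤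
      4 * Real.pi ^ 2 * r ^ 2 / 3 := by
  
  have hπ : (0 : ℝ) < Real.pi := Real.pi_pos
  have hπ' : Real.pi ≠ 0 := hπ.ne'
  have hρn : ρ n ^ 2 ≤ r ^ 2 :=
    le_trans (Summable.le_tsum hsum n fun j _ => sq_nonneg _) hρ
  -- the shifted inverse-square sum
  have hshift : HasSum (fun k : ℤ => 1 / ((k : ℝ) - n) ^ 2) (Real.pi ^ 2 / 3) := by
    have h := ((Equiv.subRight n).hasSum_iff
      (f := fun j : ℤ => 1 / (j : ℝ) ^ 2)).mpr akn_hasSum_int_inv_sq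
    convert h using 2 with k
    simp only [Function.comp_apply, Equiv.subRight_apply]
    push_cast
    ring
  -- weights
  set w : ℤ → ℝ := fun k => if k = n then 0 else 1 / (Real.pi * ((k : ℝ) - n)) with hwdef
  have hw2 : ∀ k, w k ^ 2 = (1 / Real.pi ^ 2) * (1 / ((k : ℝ) - n) ^ 2) := by
    intro k
    by_cases hk : k = n
    · simp [hwdef, hk]
    · have hkn : ((k : ℝ) - n) ≠ 0 := sub_ne_zero.mpr (by exact_mod_cast hk)
      simp only [hwdef, if_neg hk]
      field_simp
  have hsum_w2 : ∀ s : Finset ℤ, ∑ k ∈ s, w k ^ 2 ≤ 1 / 3 := by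
    intro s
    calc ∑ k ∈ s, w k ^ 2 = (1 / Real.pi ^ 2) * ∑ k ∈ s, 1 / ((k : ℝ) - n) ^ 2 := by
          rw [Finset.mul_sum]; exact Finset.sum_congr rfl fun k _ => hw2 k
      _ ≤ (1 / Real.pi ^ 2) * (Real.pi ^ 2 / 3) := by
          refine mul_le_mul_of_nonneg_left ?_ (by positivity)
          refine le_trans (Summable.sum_le_tsum s (fun i _ => by positivity) hshift.summable) ?_
          rw [hshift.tsum_eq]
      _ = 1 / 3 := by field_simp
  have hsum_ρ2 : ∀ s : Finset ℤ, ∑ k ∈ s, ρ k ^ 2 ≤ r ^ 2 := fun s =>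
    le_trans (Summable.sum_le_tsum s (fun i _ => sq_nonneg _) hsum) hρ
  -- Cauchy–Schwarz bound on finite sums of |ρ k * w k|
  have hCS : ∀ s : Finset ℤ, ∑ k ∈ s, |ρ k * w k| ≤ r / Real.sqrt 3 := by
    intro s
    have h1 : (∑ k ∈ s, |ρ k| * |w k|) ^ 2 ≤ (∑ k ∈ s, |ρ k| ^ 2) * ∑ k ∈ s, |w k| ^ 2 :=
      Finset.sum_mul_sq_le_sq_mul_sq s _ _
    simp only [sq_abs] at h1
    have h2 : (∑ k ∈ s, |ρ k * w k|) ^ 2 ≤ r ^ 2 * (1 / 3) := by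
      simp only [abs_mul]
      refine le_trans h1 (mul_le_mul (hsum_ρ2 s) (hsum_w2 s)
        (Finset.sum_nonneg fun _ _ => sq_nonneg _) (by positivity))
    have h3 : 0 ≤ ∑ k ∈ s, |ρ k * w k| := Finset.sum_nonneg fun _ _ => abs_nonneg _
    calc ∑ k ∈ s, |ρ k * w k| = Real.sqrt ((∑ k ∈ s, |ρ k * w k|) ^ 2) :=
          (Real.sqrt_sq h3).symm
      _ ≤ Real.sqrt (r ^ 2 * (1 / 3)) := Real.sqrt_le_sqrt h2
      _ = r / Real.sqrt 3 := by
          rw [show r ^ 2 * (1 / 3) = (r / Real.sqrt 3) ^ 2 by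
            rw [div_pow, Real.sq_sqrt (by norm_num : (0:ℝ) ≤ 3)]; ring,
            Real.sqrt_sq (div_nonneg hr.le (Real.sqrt_nonneg 3))]
  have hb_abs : Summable fun k => |ρ k * w k| :=
    summable_of_sum_le (fun k => abs_nonneg _) hCS
  have hb : Summable fun k => ρ k * w k := hb_abs.of_abs
  set S : ℝ := ∑' k, ρ k * w k with hSdef
  have hS_le : |S| ≤ r / Real.sqrt 3 := by
    have h1 : ‖S‖ ≤ ∑' k, ‖ρ k * w k‖ :=
      norm_tsum_le_tsum_norm (by simpa only [Real.norm_eq_abs] using hb_abs)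
    simp only [Real.norm_eq_abs] at h1
    exact le_trans h1 (Summable.tsum_le_of_sum_le hb_abs hCS)
  -- convergence of partial sums
  have hmono : Monotone (fun N : ℕ => Finset.Icc (-(N : ℤ)) N) := by
    intro p q hpq
    apply Finset.Icc_subset_Icc <;> simp <;> exact_mod_cast hpq
  have htends : Tendsto (fun N : ℕ => Finset.Icc (-(N : ℤ)) N) atTop atTop :=
    tendsto_atTop_finset_of_monotone hmono fun x =>
      ⟨x.natAbs, by simp only [Finset.mem_Icc]; omega⟩
  have hB : Tendsto (fun N : ℕ => ∑ k ∈ Finset.Icc (-(N : ℤ)) N, ρ k * w k)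
      atTop (nhds S) := hb.hasSum.comp htends
  have hT := akn_pv_tendsto n
  have key : ∀ N : ℕ, ∑ k ∈ Finset.Icc (-(N : ℤ)) N,
        (if k = n then 0 else (ρ k - ρ n) / (Real.pi * ((k : ℝ) - n)))
      = (∑ k ∈ Finset.Icc (-(N : ℤ)) N, ρ k * w k) -
        (ρ n / Real.pi) * ∑ k ∈ Finset.Icc (-(N : ℤ)) N,
          (if k = n then 0 else 1 / ((k : ℝ) - n)) := by
    intro N
    rw [Finset.mul_sum, ← Finset.sum_sub_distrib]
    refine Finset.sum_congr rfl fun k _ => ?_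
    by_cases hk : k = n
    · simp [hwdef, hk]
    · have hkn : ((k : ℝ) - n) ≠ 0 := sub_ne_zero.mpr (by exact_mod_cast hk)
      rw [if_neg hk, if_neg hk]
      simp only [hwdef, if_neg hk]
      field_simp
      try ring
  have hmain : Tendsto (fun N : ℕ => ∑ k ∈ Finset.Icc (-(N : ℤ)) N,
      (if k = n then 0 else (ρ k - ρ n) / (Real.pi * ((k : ℝ) - n)))) atTop (nhds S) := by
    have h1 := hB.sub (hT.const_mul (ρ n / Real.pi))
    rw [mul_zero, sub_zero] at h1
    exact h1.congr fun N => (key N).symm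
  refine ⟨⟨S, hmain, hS_le⟩, ?_, ?_⟩
  -- summability of squares and bound
  all_goals {
    have hu_sum : Summable (fun k : ℤ =>
        2 / Real.pi ^ 2 * ρ k ^ 2 + (2 * ρ n ^ 2 / Real.pi ^ 2) * (1 / ((k : ℝ) - n) ^ 2)) :=
      (hsum.mul_left _).add (hshift.summable.mul_left _)
    have hptwise : ∀ k : ℤ,
        (if k = n then 0 else (ρ k - ρ n) / (Real.pi * ((k : ℝ) - n))) ^ 2 ≤
        2 / Real.pi ^ 2 * ρ k ^ 2 + (2 * ρ n ^ 2 / Real.pi ^ 2) * (1 / ((k : ℝ) - n) ^ 2) := by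
      intro k
      by_cases hk : k = n
      · rw [if_pos hk, zero_pow (by norm_num : 2 ≠ 0)]
        positivity
      · rw [if_neg hk]
        have hkn : ((k : ℝ) - n) ≠ 0 := sub_ne_zero.mpr (by exact_mod_cast hk)
        have h1 : (1 : ℝ) ≤ ((k : ℝ) - n) ^ 2 := by
          have h2 : (1 : ℤ) ≤ (k - n) ^ 2 := by
            have hne : k - n ≠ 0 := sub_ne_zero.mpr hk
            rcases hne.lt_or_gt with hlt | hlt <;> nlinarith
          calc (1 : ℝ) ≤ (((k - n) ^ 2 : ℤ) : ℝ) := by exact_mod_cast h2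
            _ = ((k : ℝ) - n) ^ 2 := by push_cast; ring
        rw [div_pow, mul_pow, div_le_iff₀ (by positivity)]
        have e : (2 / Real.pi ^ 2 * ρ k ^ 2 +
            (2 * ρ n ^ 2 / Real.pi ^ 2) * (1 / ((k : ℝ) - n) ^ 2)) *
            (Real.pi ^ 2 * ((k : ℝ) - n) ^ 2)
            = 2 * ρ k ^ 2 * ((k : ℝ) - n) ^ 2 + 2 * ρ n ^ 2 := by
          field_simp
        rw [e]
        nlinarith [sq_nonneg (ρ k + ρ n), sq_nonneg (ρ k)]
    have hsq_sum : Summable (fun k : ℤ =>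
        (if k = n then 0 else (ρ k - ρ n) / (Real.pi * ((k : ℝ) - n))) ^ 2) :=
      Summable.of_nonneg_of_le (fun k => sq_nonneg _) hptwise hu_sum
    first
    | exact hsq_sum
    | {
      refine le_trans (Summable.tsum_le_tsum hptwise hsq_sum hu_sum) ?_
      rw [Summable.tsum_add (hsum.mul_left _) (hshift.summable.mul_left _), tsum_mul_left,
        tsum_mul_left, hshift.tsum_eq]
      have e2 : (2 * ρ n ^ 2 / Real.pi ^ 2) * (Real.pi ^ 2 / 3) = 2 * ρ n ^ 2 / 3 := by
        field_simp
      rw [e2]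
      have hT0 : (0 : ℝ) ≤ ∑' k, ρ k ^ 2 := tsum_nonneg fun _ => sq_nonneg _
      have h9 : (9 : ℝ) < Real.pi ^ 2 := by nlinarith [Real.pi_gt_three]
      have hA : 2 / Real.pi ^ 2 * (∑' k, ρ k ^ 2) ≤ 1 * r ^ 2 := by
        refine mul_le_mul ?_ hρ hT0 one_pos.le
        rw [div_le_one (by positivity)]
        nlinarith
      have h10 : 9 * r ^ 2 ≤ Real.pi ^ 2 * r ^ 2 :=
        mul_le_mul_of_nonneg_right h9.le (sq_nonneg r)
      linarith
    }
  }
end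

section
/- Let h > 0 and let (λ_n)_{n∈ℤ} be a strictly increasing real sequence with λ_{n+1} − λ_n ≥ 2h for all n, λ_n = πn + ρ_n with Σ ρ_n² ≤ r². Then for every n ∈ ℤ, the principal-value product Π_{k≠n} (λ_k − λ_n)/(π(k−n)) converges to a positive number P_n, and there exist constants 0 < K₁ ≤ K₂ < ∞, depending only on h and r (not on n or on the particular sequence), such that K₁ ≤ P_n ≤ K₂. -/
open Filter Finset

private lemma log_one_add_est {δ a : ℝ} (hδ0 : 0 < δ) (hδa : δ ≤ 1 + a) :
    |Real.log (1 + a) - a| ≤ a ^ 2 / δ := by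
  have hx : 0 < 1 + a := lt_of_lt_of_le hδ0 hδa
  have h1 : Real.log (1 + a) ≤ a := by
    have := Real.log_le_sub_one_of_pos hx; linarith
  have h2 : 1 - (1 + a)⁻¹ ≤ Real.log (1 + a) := by
    have := Real.log_le_sub_one_of_pos (inv_pos.mpr hx)
    rw [Real.log_inv] at this; linarith
  have key : a - Real.log (1 + a) ≤ a ^ 2 / (1 + a) := by
    have hid : a - (1 - (1 + a)⁻¹) = a ^ 2 / (1 + a) := by
      field_simp; ring
    linarith [h2, hid ▸ (le_refl (a ^ 2 / (1 + a)))]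
  have hle : a ^ 2 / (1 + a) ≤ a ^ 2 / δ :=
    div_le_div_of_nonneg_left (sq_nonneg a) hδ0 hδa
  rw [abs_sub_comm, abs_of_nonneg (by linarith)]
  linarith

private lemma sum_inv_sym (M : ℤ) : ∑ j ∈ Icc (-M) M, (1 / (j : ℝ)) = 0 := by
  have h : ∑ j ∈ Icc (-M) M, (1 / (j : ℝ))
      = ∑ j ∈ Icc (-M) M, (-(1 / (j : ℝ))) := by
    apply Finset.sum_equiv (Equiv.neg ℤ)
    · intro i; simp [Finset.mem_Icc]; omega
    · intro i _; simp [Equiv.neg]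
  rw [Finset.sum_neg_distrib] at h
  linarith

private lemma sq_div_helper (x p d : ℝ) : (x / (p * d)) ^ 2 = x ^ 2 * (1 / d ^ 2) / p ^ 2 := by
  ring

private lemma div_mul_helper (x p d : ℝ) : x / (p * d) = x * (1 / d) / p := by
  ring

private lemma abs_mul_sqrt_le (x y : ℝ) (hy : 0 ≤ y) :
    |x| * Real.sqrt y ≤ (x ^ 2 + y) / 2 := by
  nlinarith [sq_nonneg (|x| - Real.sqrt y), Real.sq_sqrt hy, sq_abs x]

set_option maxHeartbeats 1000000 in
/-- let `h, r > 0`.  There exist constants `0 < K₁ ≤ K₂ < ∞`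
depending only on `h` and `r` such that for every strictly increasing real
sequence `(λ_n)_{n∈ℤ}` with `λ_{n+1} − λ_n ≥ 2h`, `λ_n = πn + ρ_n` and
`Σ ρ_n² ≤ r²`, and every `n ∈ ℤ`, the principal-value product
`Π_{k≠n} (λ_k − λ_n)/(π(k−n))` converges to a number `P_n ∈ [K₁, K₂]`
(in particular `P_n > 0`). -/
theorem pv_product_uniform_bounds (h r : ℝ) (hh : 0 < h) (hr : 0 < r) :
    ∃ K₁ K₂ : ℝ, 0 < K₁ ∧ K₁ ≤ K₂ ∧
      ∀ (lam : ℤ → ℝ), StrictMono lam →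
        (∀ n : ℤ, lam n + 2 * h ≤ lam (n + 1)) →
        (Summable fun n : ℤ => (lam n - Real.pi * n) ^ 2) →
        (∑' n : ℤ, (lam n - Real.pi * n) ^ 2) ≤ r ^ 2 →
        ∀ n : ℤ, ∃ P : ℝ,
          Tendsto (fun N : ℕ => ∏ k ∈ (Finset.Icc (-(N : ℤ)) N).erase n,
              (lam k - lam n) / (Real.pi * (k - n))) atTop (nhds P) ∧
          K₁ ≤ P ∧ P ≤ K₂ := by
  have hπ := Real.pi_pos
  set δ : ℝ := min 1 (2 * h / Real.pi) with hδdef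
  have hδ0 : 0 < δ := lt_min one_pos (by positivity)
  have hδ1 : δ ≤ 1 := min_le_left _ _
  have hS_summ : Summable (fun m : ℤ => 1 / (m : ℝ) ^ 2) :=
    Real.summable_one_div_int_pow.mpr one_lt_two
  set S : ℝ := ∑' m : ℤ, 1 / (m : ℝ) ^ 2 with hSdef
  have hS0 : 0 ≤ S := tsum_nonneg fun m => by positivity
  set C : ℝ := 2 * (r ^ 2 + r ^ 2 * S) / (δ * Real.pi ^ 2) + (r ^ 2 + S) / (2 * Real.pi)
    with hCdef
  have hC0 : 0 ≤ C := by positivity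
  refine ⟨Real.exp (-C), Real.exp C, Real.exp_pos _, Real.exp_le_exp.mpr (by linarith), ?_⟩
  intro lam hmono hstep hsum hsum_le n
  -- separation
  have hsep : ∀ m k : ℤ, m < k → 2 * h * ((k : ℝ) - m) ≤ lam k - lam m := by
    have key : ∀ d : ℕ, ∀ m : ℤ, 2 * h * ((d : ℝ) + 1) ≤ lam (m + 1 + d) - lam m := by
      intro d
      induction d with
      | zero =>
        intro m
        have := hstep m
        norm_num
        linarith
      | succ d ih =>
        intro m
        have h1 := hstep m
        have h2 := ih (m + 1)
        have hidx : m + 1 + ((d : ℤ) + 1) = m + 1 + 1 + d := by ring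
        push_cast
        rw [hidx]
        push_cast at h2
        linarith
    intro m k hmk
    obtain ⟨d, hd⟩ : ∃ d : ℕ, k = m + 1 + d := ⟨(k - m - 1).toNat, by omega⟩
    subst hd
    have hkey := key d m
    have hcast : ((m + 1 + (d : ℤ) : ℤ) : ℝ) - (m : ℝ) = (d : ℝ) + 1 := by push_cast; ring
    rw [hcast]
    exact hkey
  set f : ℤ → ℝ := fun k => (lam k - lam n) / (Real.pi * ((k : ℝ) - n)) with hfdef
  have keypos : ∀ m k : ℤ, m < k →
      2 * h / Real.pi ≤ (lam k - lam m) / (Real.pi * ((k : ℝ) - m)) := by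
    intro m k hmk
    have hd : (1 : ℝ) ≤ (k : ℝ) - m := by
      have : (1 : ℤ) ≤ k - m := by omega
      exact_mod_cast this
    have hnum := hsep m k hmk
    rw [div_le_div_iff₀ hπ (by nlinarith)]
    nlinarith
  have hfδ : ∀ k, k ≠ n → δ ≤ f k := by
    intro k hk
    have hmin : δ ≤ 2 * h / Real.pi := min_le_right _ _
    rcases lt_or_gt_of_ne hk with hlt | hgt
    · have hkp := keypos k n hlt
      have heq : f k = (lam n - lam k) / (Real.pi * ((n : ℝ) - k)) := by
        simp only [hfdef]
        rw [show Real.pi * ((k : ℝ) - n) = -(Real.pi * ((n : ℝ) - k)) by ring,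
          show lam k - lam n = -(lam n - lam k) by ring, neg_div_neg_eq]
      rw [heq]; exact le_trans hmin hkp
    · exact le_trans hmin (keypos n k hgt)
  have hfpos : ∀ k, k ≠ n → 0 < f k := fun k hk => lt_of_lt_of_le hδ0 (hfδ k hk)
  set ρ : ℤ → ℝ := fun k => lam k - Real.pi * k with hρdef
  have hρ_summ : Summable (fun k : ℤ => (ρ k) ^ 2) := hsum
  have hρ_le : (∑' k : ℤ, (ρ k) ^ 2) ≤ r ^ 2 := hsum_le
  have hρn : (ρ n) ^ 2 ≤ r ^ 2 :=
    le_trans (Summable.le_tsum hρ_summ n fun _ _ => sq_nonneg _) hρ_le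
  set w : ℤ → ℝ := fun k => 1 / ((k : ℝ) - n) ^ 2 with hwdef
  have hw_eq : ∀ k : ℤ, w k = 1 / (((k - n : ℤ) : ℝ)) ^ 2 := by
    intro k; simp [hwdef]
  have hw_summ : Summable w := by
    have h1 : Summable ((fun m : ℤ => 1 / (m : ℝ) ^ 2) ∘ (Equiv.subRight n)) :=
      (Equiv.subRight n).summable_iff.mpr hS_summ
    apply h1.congr
    intro k
    simp only [Function.comp_apply, Equiv.subRight_apply]
    exact (hw_eq k).symm
  have hw_sum : ∑' k, w k = S := by
    have h1 := (Equiv.subRight n).tsum_eq (fun m : ℤ => 1 / (m : ℝ) ^ 2)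
    rw [hSdef, ← h1]
    exact tsum_congr fun k => by
      simp only [Equiv.subRight_apply]; exact hw_eq k
  have hw_nonneg : ∀ k, 0 ≤ w k := fun k => by positivity
  have hw_le_one : ∀ k, w k ≤ 1 := by
    intro k
    rcases eq_or_ne k n with rfl | hk
    · simp [hwdef]
    · have h1 : (1 : ℝ) ≤ ((k : ℝ) - n) ^ 2 := by
        have h2 : (1 : ℤ) ≤ (k - n) ^ 2 := by
          have h3 : (1 : ℤ) ≤ |k - n| := Int.one_le_abs (by omega)
          nlinarith [sq_abs (k - n)]
        have h4 : ((1 : ℤ) : ℝ) ≤ (((k - n) ^ 2 : ℤ) : ℝ) := by exact_mod_cast h2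
        push_cast at h4
        linarith
      simp only [hwdef]
      exact div_le_one_of_le₀ h1 (by positivity)
  -- the absolutely summable part
  set G : ℤ → ℝ := fun k =>
    if k = n then 0 else Real.log (f k) + ρ n / (Real.pi * ((k : ℝ) - n)) with hGdef
  set Mf : ℤ → ℝ := fun k =>
    2 / (δ * Real.pi ^ 2) * ((ρ k) ^ 2 + (ρ n) ^ 2 * w k)
      + 1 / (2 * Real.pi) * ((ρ k) ^ 2 + w k) with hMdef
  have hGM : ∀ k, |G k| ≤ Mf k := by
    intro k
    rcases eq_or_ne k n with rfl | hk
    · simp only [hGdef, hMdef, if_pos rfl, abs_zero]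
      positivity
    · have hkn : ((k : ℝ) - n) ≠ 0 := by
        have : (k - n : ℤ) ≠ 0 := by omega
        intro hcon
        apply this
        have : ((k - n : ℤ) : ℝ) = 0 := by push_cast; linarith
        exact_mod_cast this
      have hden : Real.pi * ((k : ℝ) - n) ≠ 0 := mul_ne_zero hπ.ne' hkn
      set a : ℝ := (ρ k - ρ n) / (Real.pi * ((k : ℝ) - n)) with hadef
      have hfa : f k = 1 + a := by
        simp only [hfdef, hadef, hρdef]
        field_simp
        ring
      have hδa : δ ≤ 1 + a := hfa ▸ hfδ k hk
      have hlogest := log_one_add_est hδ0 hδa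
      have hid : G k = (Real.log (1 + a) - a) + ρ k / (Real.pi * ((k : ℝ) - n)) := by
        simp only [hGdef, if_neg hk]
        rw [hfa]
        have harith : a + ρ n / (Real.pi * ((k : ℝ) - n)) = ρ k / (Real.pi * ((k : ℝ) - n)) := by
          rw [hadef, hρdef]
          field_simp
          ring
        linarith [harith]
      have hwk1 := hw_le_one k
      have hwk0 := hw_nonneg k
      have hb1 : |Real.log (1 + a) - a| ≤ 2 / (δ * Real.pi ^ 2) * ((ρ k) ^ 2 + (ρ n) ^ 2 * w k) := by
        refine le_trans hlogest ?_
        have ha2 : a ^ 2 = (ρ k - ρ n) ^ 2 * w k / Real.pi ^ 2 := by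
          rw [hadef]; simp only [hwdef]; exact sq_div_helper _ _ _
        have hsq : (ρ k - ρ n) ^ 2 ≤ 2 * (ρ k) ^ 2 + 2 * (ρ n) ^ 2 := by
          nlinarith [sq_nonneg (ρ k + ρ n)]
        have key2 : (ρ k - ρ n) ^ 2 * w k ≤ 2 * ((ρ k) ^ 2 + (ρ n) ^ 2 * w k) := by
          nlinarith [mul_le_mul_of_nonneg_right hsq hwk0,
            mul_le_of_le_one_right (sq_nonneg (ρ k)) hwk1]
        have hre : 2 / (δ * Real.pi ^ 2) * ((ρ k) ^ 2 + (ρ n) ^ 2 * w k)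
            = 2 * ((ρ k) ^ 2 + (ρ n) ^ 2 * w k) / (Real.pi ^ 2 * δ) := by ring
        rw [ha2, div_div, hre]
        gcongr
      have hb2 : |ρ k / (Real.pi * ((k : ℝ) - n))| ≤ 1 / (2 * Real.pi) * ((ρ k) ^ 2 + w k) := by
        have hsw : Real.sqrt (w k) = 1 / |(k : ℝ) - n| := by
          simp only [hwdef]
          rw [show (1 : ℝ) / ((k : ℝ) - n) ^ 2 = (1 / |(k : ℝ) - n|) ^ 2 by
            rw [div_pow, one_pow, sq_abs]]
          exact Real.sqrt_sq (by positivity)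
        have hammg : |ρ k| * Real.sqrt (w k) ≤ ((ρ k) ^ 2 + w k) / 2 := by
          exact abs_mul_sqrt_le (ρ k) (w k) (hw_nonneg k)
        have habs : |ρ k / (Real.pi * ((k : ℝ) - n))| = |ρ k| * Real.sqrt (w k) / Real.pi := by
          rw [abs_div, abs_mul, abs_of_pos hπ, hsw]
          exact div_mul_helper _ _ _
        rw [habs]
        have hre2 : 1 / (2 * Real.pi) * ((ρ k) ^ 2 + w k)
            = (((ρ k) ^ 2 + w k) / 2) / Real.pi := by ring
        rw [hre2]
        gcongr
      calc |G k| = |(Real.log (1 + a) - a) + ρ k / (Real.pi * ((k : ℝ) - n))| := by rw [hid]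
        _ ≤ |Real.log (1 + a) - a| + |ρ k / (Real.pi * ((k : ℝ) - n))| := abs_add_le _ _
        _ ≤ Mf k := by simp only [hMdef]; linarith
  have hM_summ : Summable Mf :=
    ((hρ_summ.add (hw_summ.mul_left ((ρ n) ^ 2))).mul_left _).add
      ((hρ_summ.add hw_summ).mul_left _)
  have hM_tsum : (∑' k, Mf k) ≤ C := by
    have ht : (∑' k, Mf k) = 2 / (δ * Real.pi ^ 2) * ((∑' k, (ρ k) ^ 2) + (ρ n) ^ 2 * S)
        + 1 / (2 * Real.pi) * ((∑' k, (ρ k) ^ 2) + S) := by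
      simp only [hMdef]
      rw [Summable.tsum_add ((hρ_summ.add (hw_summ.mul_left _)).mul_left _)
        ((hρ_summ.add hw_summ).mul_left _), tsum_mul_left, tsum_mul_left,
        Summable.tsum_add hρ_summ (hw_summ.mul_left _), Summable.tsum_add hρ_summ hw_summ,
        tsum_mul_left, hw_sum]
    rw [ht, hCdef]
    have h1 : (∑' k, (ρ k) ^ 2) ≤ r ^ 2 := hρ_le
    have h2 : (ρ n) ^ 2 * S ≤ r ^ 2 * S := mul_le_mul_of_nonneg_right hρn hS0
    have c1 : (0:ℝ) < 2 / (δ * Real.pi ^ 2) := by positivity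
    have c2 : (0:ℝ) < 1 / (2 * Real.pi) := by positivity
    rw [show 2 * (r ^ 2 + r ^ 2 * S) / (δ * Real.pi ^ 2)
        = 2 / (δ * Real.pi ^ 2) * (r ^ 2 + r ^ 2 * S) by ring,
      show (r ^ 2 + S) / (2 * Real.pi) = 1 / (2 * Real.pi) * (r ^ 2 + S) by ring]
    have hm1 := mul_le_mul_of_nonneg_left (add_le_add h1 h2) c1.le
    have hm2 := mul_le_mul_of_nonneg_left (add_le_add h1 (le_refl S)) c2.le
    linarith
  have hGabs_summ : Summable (fun k => |G k|) :=
    Summable.of_nonneg_of_le (fun k => abs_nonneg _) hGM hM_summ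
  have hG_summ : Summable G := hGabs_summ.of_abs
  set T : ℝ := ∑' k, G k with hTdef
  have hT_bound : |T| ≤ C := by
    have h1 : ‖∑' k, G k‖ ≤ ∑' k, ‖G k‖ :=
      norm_tsum_le_tsum_norm (by simpa only [Real.norm_eq_abs] using hGabs_summ)
    simp only [Real.norm_eq_abs] at h1
    calc |T| ≤ ∑' k, |G k| := h1
      _ ≤ ∑' k, Mf k := Summable.tsum_le_tsum hGM hGabs_summ hM_summ
      _ ≤ C := hM_tsum
  have hIcc : Tendsto (fun N : ℕ => Finset.Icc (-(N : ℤ)) N) atTop atTop := by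
    apply tendsto_atTop_finset_of_monotone
    · intro a b hab
      refine Finset.Icc_subset_Icc ?_ ?_
      · simp only [neg_le_neg_iff]; exact_mod_cast hab
      · exact_mod_cast hab
    · intro x
      exact ⟨x.natAbs, by simp only [Finset.mem_Icc]; omega⟩
  have hA : Tendsto (fun N : ℕ => ∑ k ∈ Finset.Icc (-(N : ℤ)) N, G k) atTop (nhds T) :=
    (hG_summ.hasSum).comp hIcc
  have hshift : ∀ N : ℕ, (∑ k ∈ Finset.Icc (-(N : ℤ)) N, 1 / ((k : ℝ) - n))
      = ∑ j ∈ Finset.Icc (-(N : ℤ) - n) ((N : ℤ) - n), 1 / (j : ℝ) := by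
    intro N
    apply Finset.sum_equiv (Equiv.subRight n)
    · intro i; simp only [Finset.mem_Icc, Equiv.subRight_apply]; omega
    · intro i _
      simp only [Equiv.subRight_apply]
      push_cast
      ring
  have hbound : ∀ N : ℕ, n.natAbs ≤ N →
      |∑ j ∈ Finset.Icc (-(N : ℤ) - n) ((N : ℤ) - n), 1 / (j : ℝ)|
        ≤ 2 * (n.natAbs : ℝ) / ((N : ℝ) - (n.natAbs : ℝ) + 1) := by
    intro N hN
    have hNZ : (n.natAbs : ℤ) ≤ (N : ℤ) := by exact_mod_cast hN
    have hdenpos : (0 : ℝ) < (N : ℝ) - (n.natAbs : ℝ) + 1 := by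
      have : (n.natAbs : ℝ) ≤ (N : ℝ) := by exact_mod_cast hN
      linarith
    rcases le_or_gt 0 n with hn | hn
    · -- n ≥ 0 : residual interval is Ioc (N-n) (N+n)
      set s : Finset ℤ := Finset.Ioc ((N : ℤ) - n) ((N : ℤ) + n) with hsdef
      have hsplit : Finset.Icc (-(N : ℤ) - n) ((N : ℤ) + n)
          = Finset.Icc (-(N : ℤ) - n) ((N : ℤ) - n) ∪ s := by
        ext x
        simp only [hsdef, Finset.mem_union, Finset.mem_Icc, Finset.mem_Ioc]
        omega
      have hdisj : Disjoint (Finset.Icc (-(N : ℤ) - n) ((N : ℤ) - n)) s := by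
        rw [Finset.disjoint_left]
        intro x hx hx'
        simp only [Finset.mem_Icc] at hx
        simp only [hsdef, Finset.mem_Ioc] at hx'
        omega
      have hzero : ∑ j ∈ Finset.Icc (-(N : ℤ) - n) ((N : ℤ) + n), (1 / (j : ℝ)) = 0 := by
        have hss := sum_inv_sym ((N : ℤ) + n)
        rw [show -((N : ℤ) + n) = -(N : ℤ) - n by ring] at hss
        exact hss
      rw [hsplit, Finset.sum_union hdisj] at hzero
      have heq : ∑ j ∈ Finset.Icc (-(N : ℤ) - n) ((N : ℤ) - n), (1 / (j : ℝ))
          = - ∑ j ∈ s, (1 / (j : ℝ)) := by linarith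
      rw [heq, abs_neg]
      have hterm : ∀ x ∈ s, |1 / (x : ℝ)| ≤ 1 / ((N : ℝ) - (n.natAbs : ℝ) + 1) := by
        intro x hx
        simp only [hsdef, Finset.mem_Ioc] at hx
        have hx1 : (N : ℤ) - (n.natAbs : ℤ) + 1 ≤ x := by omega
        have hx1R : (N : ℝ) - (n.natAbs : ℝ) + 1 ≤ (x : ℝ) := by exact_mod_cast hx1
        have hxpos : (0 : ℝ) < (x : ℝ) := lt_of_lt_of_le hdenpos hx1R
        rw [abs_of_pos (by positivity)]
        exact one_div_le_one_div_of_le hdenpos hx1R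
      have hcard : ((s.card : ℝ)) = 2 * (n.natAbs : ℝ) := by
        have h1 : s.card = ((N : ℤ) + n - ((N : ℤ) - n)).toNat := by
          rw [hsdef, Int.card_Ioc]
        have h2 : ((N : ℤ) + n - ((N : ℤ) - n)) = 2 * n := by ring
        have h3 : ((2 * n).toNat : ℤ) = 2 * n := Int.toNat_of_nonneg (by omega)
        have h4 : ((n.natAbs : ℤ)) = n := Int.natAbs_of_nonneg hn
        have : (s.card : ℤ) = 2 * (n.natAbs : ℤ) := by rw [h1, h2]; omega
        exact_mod_cast this
      calc |∑ j ∈ s, (1 / (j : ℝ))| ≤ ∑ j ∈ s, |1 / (j : ℝ)| :=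
            Finset.abs_sum_le_sum_abs _ _
        _ ≤ s.card • (1 / ((N : ℝ) - (n.natAbs : ℝ) + 1)) :=
            Finset.sum_le_card_nsmul _ _ _ hterm
        _ = (s.card : ℝ) * (1 / ((N : ℝ) - (n.natAbs : ℝ) + 1)) := nsmul_eq_mul _ _
        _ = 2 * (n.natAbs : ℝ) / ((N : ℝ) - (n.natAbs : ℝ) + 1) := by
            rw [hcard]; ring
    · -- n < 0 : residual interval is Ico (-(N:ℤ)+n) (-(N:ℤ)-n)
      set s : Finset ℤ := Finset.Ico (-(N : ℤ) + n) (-(N : ℤ) - n) with hsdef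
      have hsplit : Finset.Icc (-(N : ℤ) + n) ((N : ℤ) - n)
          = s ∪ Finset.Icc (-(N : ℤ) - n) ((N : ℤ) - n) := by
        ext x
        simp only [hsdef, Finset.mem_union, Finset.mem_Icc, Finset.mem_Ico]
        omega
      have hdisj : Disjoint s (Finset.Icc (-(N : ℤ) - n) ((N : ℤ) - n)) := by
        rw [Finset.disjoint_left]
        intro x hx hx'
        simp only [hsdef, Finset.mem_Ico] at hx
        simp only [Finset.mem_Icc] at hx'
        omega
      have hzero : ∑ j ∈ Finset.Icc (-(N : ℤ) + n) ((N : ℤ) - n), (1 / (j : ℝ)) = 0 := by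
        have hss := sum_inv_sym ((N : ℤ) - n)
        rw [show -((N : ℤ) - n) = -(N : ℤ) + n by ring] at hss
        exact hss
      rw [hsplit, Finset.sum_union hdisj] at hzero
      have heq : ∑ j ∈ Finset.Icc (-(N : ℤ) - n) ((N : ℤ) - n), (1 / (j : ℝ))
          = - ∑ j ∈ s, (1 / (j : ℝ)) := by linarith
      rw [heq, abs_neg]
      have hterm : ∀ x ∈ s, |1 / (x : ℝ)| ≤ 1 / ((N : ℝ) - (n.natAbs : ℝ) + 1) := by
        intro x hx
        simp only [hsdef, Finset.mem_Ico] at hx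
        have hx1 : x ≤ -((N : ℤ) - (n.natAbs : ℤ) + 1) := by omega
        have hx1R : (x : ℝ) ≤ -((N : ℝ) - (n.natAbs : ℝ) + 1) := by exact_mod_cast hx1
        have hxneg : (x : ℝ) < 0 := lt_of_le_of_lt hx1R (by linarith)
        rw [abs_div, abs_one, abs_of_neg hxneg]
        rw [div_le_div_iff₀ (by linarith) hdenpos]
        linarith
      have hcard : ((s.card : ℝ)) = 2 * (n.natAbs : ℝ) := by
        have h1 : s.card = (-(N : ℤ) - n - (-(N : ℤ) + n)).toNat := by
          rw [hsdef, Int.card_Ico]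
        have : (s.card : ℤ) = 2 * (n.natAbs : ℤ) := by rw [h1]; omega
        exact_mod_cast this
      calc |∑ j ∈ s, (1 / (j : ℝ))| ≤ ∑ j ∈ s, |1 / (j : ℝ)| :=
            Finset.abs_sum_le_sum_abs _ _
        _ ≤ s.card • (1 / ((N : ℝ) - (n.natAbs : ℝ) + 1)) :=
            Finset.sum_le_card_nsmul _ _ _ hterm
        _ = (s.card : ℝ) * (1 / ((N : ℝ) - (n.natAbs : ℝ) + 1)) := nsmul_eq_mul _ _
        _ = 2 * (n.natAbs : ℝ) / ((N : ℝ) - (n.natAbs : ℝ) + 1) := by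
            rw [hcard]; ring
  have hSn : Tendsto (fun N : ℕ => ∑ k ∈ Finset.Icc (-(N : ℤ)) N, 1 / ((k : ℝ) - n))
      atTop (nhds 0) := by
    apply squeeze_zero_norm' (a := fun N : ℕ => 2 * (n.natAbs : ℝ) / ((N : ℝ) - (n.natAbs : ℝ) + 1))
    · filter_upwards [eventually_ge_atTop n.natAbs] with N hN
      rw [Real.norm_eq_abs, hshift N]
      exact hbound N hN
    · have hden : Tendsto (fun N : ℕ => (N : ℝ) - (n.natAbs : ℝ) + 1) atTop atTop := by
        have h1 : Tendsto (fun N : ℕ => (N : ℝ)) atTop atTop := tendsto_natCast_atTop_atTop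
        have h2 := tendsto_atTop_add_const_right atTop (-(n.natAbs : ℝ) + 1) h1
        apply h2.congr'
        filter_upwards with N
        ring
      exact tendsto_const_nhds.div_atTop hden
  have hL : Tendsto (fun N : ℕ =>
      (∑ k ∈ Finset.Icc (-(N : ℤ)) N, G k)
        - (ρ n / Real.pi) * ∑ k ∈ Finset.Icc (-(N : ℤ)) N, 1 / ((k : ℝ) - n))
      atTop (nhds T) := by
    have := hA.sub ((hSn.const_mul (ρ n / Real.pi)))
    simpa using this
  have hlog : ∀ N : ℕ,
      Real.log (∏ k ∈ (Finset.Icc (-(N : ℤ)) N).erase n, f k)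
        = (∑ k ∈ Finset.Icc (-(N : ℤ)) N, G k)
          - (ρ n / Real.pi) * ∑ k ∈ Finset.Icc (-(N : ℤ)) N, 1 / ((k : ℝ) - n) := by
    intro N
    rw [Real.log_prod (fun k hk => (hfpos k (Finset.ne_of_mem_erase hk)).ne')]
    have hstepwise : ∀ k ∈ (Finset.Icc (-(N : ℤ)) N).erase n,
        Real.log (f k) = G k - (ρ n / Real.pi) * (1 / ((k : ℝ) - n)) := by
      intro k hk
      have hk' : k ≠ n := Finset.ne_of_mem_erase hk
      simp only [hGdef, if_neg hk']
      have hre : ρ n / (Real.pi * ((k : ℝ) - n)) = (ρ n / Real.pi) * (1 / ((k : ℝ) - n)) := by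
        rw [← div_div, div_eq_mul_one_div (ρ n / Real.pi)]
      rw [hre]; ring
    rw [Finset.sum_congr rfl hstepwise, Finset.sum_sub_distrib, ← Finset.mul_sum]
    rw [Finset.sum_erase _ (by simp [hGdef]),
      Finset.sum_erase (a := n) _ (by simp)]
  have hPpos : ∀ N : ℕ, 0 < ∏ k ∈ (Finset.Icc (-(N : ℤ)) N).erase n, f k := by
    intro N
    apply Finset.prod_pos
    intro k hk
    exact hfpos k (Finset.ne_of_mem_erase hk)
  refine ⟨Real.exp T, ?_, ?_, ?_⟩
  · have hexp : Tendsto (fun N : ℕ => Real.exp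
        ((∑ k ∈ Finset.Icc (-(N : ℤ)) N, G k)
          - (ρ n / Real.pi) * ∑ k ∈ Finset.Icc (-(N : ℤ)) N, 1 / ((k : ℝ) - n)))
        atTop (nhds (Real.exp T)) := (Real.continuous_exp.tendsto T).comp hL
    apply hexp.congr
    intro N
    rw [← hlog N, Real.exp_log (hPpos N)]
  · rw [Real.exp_le_exp]; cases' abs_le.mp hT_bound with h1 _; linarith
  · rw [Real.exp_le_exp]; cases' abs_le.mp hT_bound with _ h2; linarith
end
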